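/- Let π be a permutation of length k, and let f_P : [k²] → ℝ be the sequence associated with a signed partition P of π as in the USPN construction. Then for every 0 ≤ m ≤ k−1, the set of all entries x ∈ [k²] satisfying m < f_P(x) < m+1 has exactly k elements, and the subsequence of f_P on these entries (in increasing index order) is order-isomorphic to π. -/

import Mathlib

/-- Index of the first part boundary `r i` that is at least `a` (capped at `u`). -/
def partIdx (r : ℕ → ℕ) (u : ℕ) (a : ℕ) : ℕ :=
  Nat.find (⟨u, Or.inr le_rfl⟩ : ∃ i, a ≤ r i ∨ u ≤ i)

theorem partIdx_le_of (r : ℕ → ℕ) (u : ℕ) {a i : ℕ} (h : a ≤ r i) : partIdx r u a ≤ i :=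
  Nat.find_le (Or.inl h)

theorem partIdx_le (r : ℕ → ℕ) (u a : ℕ) : partIdx r u a ≤ u :=
  Nat.find_le (Or.inr le_rfl)

theorem partIdx_spec (r : ℕ → ℕ) (u a : ℕ) :
    a ≤ r (partIdx r u a) ∨ u ≤ partIdx r u a := by
  unfold partIdx
  exact Nat.find_spec (⟨u, Or.inr le_rfl⟩ : ∃ i, a ≤ r i ∨ u ≤ i)

theorem partIdx_min (r : ℕ → ℕ) (u a : ℕ) {i : ℕ} (h : i < partIdx r u a) :
    r i < a ∧ i < u := by
  have h' := Nat.find_min (⟨u, Or.inr le_rfl⟩ : ∃ i, a ≤ r i ∨ u ≤ i) h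
  push_neg at h'
  exact ⟨h'.1, h'.2⟩

theorem partIdx_props (r : ℕ → ℕ) (u : ℕ) (hu1 : 1 ≤ u) (hr0 : r 0 = 0)
    (a : ℕ) (h1 : 1 ≤ a) (h2 : a ≤ r u) :
    1 ≤ partIdx r u a ∧ partIdx r u a ≤ u ∧ r (partIdx r u a - 1) < a ∧
      a ≤ r (partIdx r u a) := by
  have hle := partIdx_le r u a
  have hub : a ≤ r (partIdx r u a) := by
    rcases partIdx_spec r u a with h | h
    · exact h
    · have he : partIdx r u a = u := le_antisymm hle h
      rw [he]; exact h2
  have h1' : 1 ≤ partIdx r u a := by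
    by_contra h
    have h0 : partIdx r u a = 0 := by omega
    rw [h0, hr0] at hub; omega
  have hlb : r (partIdx r u a - 1) < a :=
    (partIdx_min r u a (i := partIdx r u a - 1) (by omega)).1
  exact ⟨h1', hle, hlb, hub⟩

theorem partIdx_uniq (r : ℕ → ℕ) (u : ℕ) (hu1 : 1 ≤ u) (hr0 : r 0 = 0)
    (hmono : ∀ i j, i ≤ j → j ≤ u → r i ≤ r j)
    {a i : ℕ} (h1 : 1 ≤ i) (h2 : i ≤ u) (hlt : r (i - 1) < a) (hle : a ≤ r i) :
    partIdx r u a = i := by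
  have ha1 : 1 ≤ a := by omega
  have hau : a ≤ r u := le_trans hle (hmono i u h2 le_rfl)
  obtain ⟨hp1, hpu, hplb, hpub⟩ := partIdx_props r u hu1 hr0 a ha1 hau
  have hle' : partIdx r u a ≤ i := partIdx_le_of r u hle
  by_contra hne
  have hlt' : partIdx r u a ≤ i - 1 := by omega
  have : r (partIdx r u a) ≤ r (i - 1) := hmono _ _ hlt' (by omega)
  omega

/-- The index function for the USPN construction: position of `a`-th entry of `π`
within the band `(m, m+1)`. -/
def theIdx (r : ℕ → ℕ) (u k m : ℕ) (s : ℕ → Bool) (a : ℕ) : ℕ :=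
  r (partIdx r u a - 1) * k +
    (if s (partIdx r u a) then m else k - 1 - m) *
      (r (partIdx r u a) - r (partIdx r u a - 1)) +
    (a - r (partIdx r u a - 1))

/-- For a signed partition `P` of a permutation `π` of length `k` (partition boundaries
`r 0 = 0 < r 1 < ⋯ < r u = k`, signs `s`), the associated sequence `f_P : [k²] → ℝ` satisfies:
for every `0 ≤ m ≤ k-1` the set of entries with value strictly between `m` and `m+1` has
exactly `k` elements and, in increasing index order, is order-isomorphic to `π`. -/
theorem stmt_6 (k u : ℕ) (hk : 1 ≤ k) (π : ℕ → ℕ)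
    (hπ : Set.BijOn π (Set.Icc 1 k) (Set.Icc 1 k))
    (r : ℕ → ℕ) (hr0 : r 0 = 0) (hru : r u = k)
    (hrmono : StrictMonoOn r (Set.Icc 0 u))
    (s : ℕ → Bool)
    -- sign constraint: for parts of length > 1, the sign is `-` (i.e. `false`) iff the
    -- minimum of the part appears (in `π`) before its maximum
    (hsign : ∀ i, 1 ≤ i → i ≤ u → 1 < r i - r (i - 1) →
      ∀ a ∈ Set.Icc (r (i - 1) + 1) (r i), ∀ b ∈ Set.Icc (r (i - 1) + 1) (r i),
        (∀ c ∈ Set.Icc (r (i - 1) + 1) (r i), π a ≤ π c ∧ π c ≤ π b) →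
        (s i = false ↔ a < b))
    (f : ℕ → ℝ)
    -- defining equations of f_P
    (hf : ∀ i, 1 ≤ i → i ≤ u → ∀ m < k, ∀ j, 1 ≤ j → j ≤ r i - r (i - 1) →
      f (r (i - 1) * k + m * (r i - r (i - 1)) + j) =
        (if s i then (m : ℝ) else (k : ℝ) - 1 - (m : ℝ)) +
          (π (r (i - 1) + j) : ℝ) / (2 * k))
    (m : ℕ) (hm : m < k) :
    {x | x ∈ Set.Icc 1 (k * k) ∧ (m : ℝ) < f x ∧ f x < (m : ℝ) + 1}.ncard = k ∧
    ∃ idx : ℕ → ℕ, StrictMonoOn idx (Set.Icc 1 k) ∧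
      idx '' Set.Icc 1 k = {x | x ∈ Set.Icc 1 (k * k) ∧ (m : ℝ) < f x ∧ f x < (m : ℝ) + 1} ∧
      ∀ a ∈ Set.Icc 1 k, ∀ b ∈ Set.Icc 1 k, (f (idx a) < f (idx b) ↔ π a < π b) := by
  have hu1 : 1 ≤ u := by
    by_contra h
    have hu0 : u = 0 := by omega
    rw [hu0, hr0] at hru; omega
  have hrle : ∀ i j, i ≤ j → j ≤ u → r i ≤ r j := fun i j hij hj =>
    hrmono.monotoneOn ⟨Nat.zero_le _, hij.trans hj⟩ ⟨Nat.zero_le _, hj⟩ hij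
  have hrk : ∀ i, i ≤ u → r i ≤ k := fun i hi => hru ▸ hrle i u hi le_rfl
  have hrlt : ∀ i, 1 ≤ i → i ≤ u → r (i - 1) < r i := fun i h1 hi =>
    hrmono ⟨Nat.zero_le _, by omega⟩ ⟨Nat.zero_le _, hi⟩ (by omega)
  have h2k : (0 : ℝ) < 2 * k := by positivity
  -- cast lemma for the sign constant
  have hcast : ((k - 1 - m : ℕ) : ℝ) = (k : ℝ) - 1 - (m : ℝ) := by
    have h' : k - 1 - m + (1 + m) = k := by omega
    have := congrArg (Nat.cast : ℕ → ℝ) h'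
    push_cast at this
    linarith
  -- key value formula
  have hkey : ∀ a, 1 ≤ a → a ≤ k →
      f (theIdx r u k m s a) = (m : ℝ) + (π a : ℝ) / (2 * k) := by
    intro a h1 h2
    obtain ⟨hi1, hiu, hlb, hub⟩ := partIdx_props r u hu1 hr0 a h1 (hru ▸ h2)
    set i := partIdx r u a with hi
    have hj1 : 1 ≤ a - r (i - 1) := by omega
    have hj2 : a - r (i - 1) ≤ r i - r (i - 1) := by omega
    have hval := hf i hi1 hiu (if s i then m else k - 1 - m) (by split <;> omega)
      (a - r (i - 1)) hj1 hj2
    rw [show r (i - 1) + (a - r (i - 1)) = a from by omega] at hval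
    show f (r (i - 1) * k + (if s i then m else k - 1 - m) * (r i - r (i - 1)) +
      (a - r (i - 1))) = _
    rw [hval]
    rcases hs : s i with _ | _
    · simp only [hs, Bool.false_eq_true, if_false, hcast]
      ring
    · simp only [hs, if_true]
  -- fractional part bounds
  have hfr : ∀ a, 1 ≤ a → a ≤ k →
      0 < (π a : ℝ) / (2 * k) ∧ (π a : ℝ) / (2 * k) ≤ 1 / 2 := by
    intro a h1 h2
    have hmem := hπ.mapsTo (Set.mem_Icc.mpr ⟨h1, h2⟩)
    rw [Set.mem_Icc] at hmem
    have hp1 : (1 : ℝ) ≤ (π a : ℝ) := by exact_mod_cast hmem.1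
    have hpk : (π a : ℝ) ≤ (k : ℝ) := by exact_mod_cast hmem.2
    constructor
    · positivity
    · rw [div_le_iff₀ h2k]; linarith
  -- values lie strictly between m and m+1
  have hin : ∀ a, 1 ≤ a → a ≤ k →
      (m : ℝ) < f (theIdx r u k m s a) ∧ f (theIdx r u k m s a) < (m : ℝ) + 1 := by
    intro a h1 h2
    obtain ⟨hf1, hf2⟩ := hfr a h1 h2
    rw [hkey a h1 h2]
    constructor <;> linarith
  -- upper bound for theIdx within its part
  have hupA : ∀ a, 1 ≤ a → a ≤ k → theIdx r u k m s a ≤ r (partIdx r u a) * k := by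
    intro a h1 h2
    obtain ⟨hi1, hiu, hlb, hub⟩ := partIdx_props r u hu1 hr0 a h1 (hru ▸ h2)
    set i := partIdx r u a with hi
    have hb1 : (if s i then m else k - 1 - m) * (r i - r (i - 1)) ≤
        (k - 1) * (r i - r (i - 1)) :=
      Nat.mul_le_mul_right _ (by split <;> omega)
    have hkd : (k - 1) * (r i - r (i - 1)) + (r i - r (i - 1)) = k * (r i - r (i - 1)) := by
      rw [Nat.sub_one_mul]
      have : r i - r (i - 1) ≤ k * (r i - r (i - 1)) := Nat.le_mul_of_pos_left _ hk
      omega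
    have hsplit : r (i - 1) * k + k * (r i - r (i - 1)) = r i * k := by
      have h3 : r i = r (i - 1) + (r i - r (i - 1)) := by omega
      calc r (i - 1) * k + k * (r i - r (i - 1))
          = r (i - 1) * k + (r i - r (i - 1)) * k := by rw [mul_comm k]
        _ = (r (i - 1) + (r i - r (i - 1))) * k := by rw [add_mul]
        _ = r i * k := by rw [← h3]
    show r (i - 1) * k + (if s i then m else k - 1 - m) * (r i - r (i - 1)) +
      (a - r (i - 1)) ≤ r i * k
    omega
  -- indices lie in [1, k²]
  have hrange : ∀ a, 1 ≤ a → a ≤ k →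
      1 ≤ theIdx r u k m s a ∧ theIdx r u k m s a ≤ k * k := by
    intro a h1 h2
    obtain ⟨hi1, hiu, hlb, hub⟩ := partIdx_props r u hu1 hr0 a h1 (hru ▸ h2)
    constructor
    · show 1 ≤ r (partIdx r u a - 1) * k +
        (if s (partIdx r u a) then m else k - 1 - m) *
          (r (partIdx r u a) - r (partIdx r u a - 1)) + (a - r (partIdx r u a - 1))
      omega
    · calc theIdx r u k m s a ≤ r (partIdx r u a) * k := hupA a h1 h2
        _ ≤ k * k := Nat.mul_le_mul_right k (hrk _ hiu)
  -- strict monotonicity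
  have hmonoI : ∀ a b, 1 ≤ a → a ≤ k → 1 ≤ b → b ≤ k → a < b →
      theIdx r u k m s a < theIdx r u k m s b := by
    intro a b ha1 ha2 hb1 hb2 hab
    obtain ⟨hia1, hiau, hla, hua⟩ := partIdx_props r u hu1 hr0 a ha1 (hru ▸ ha2)
    obtain ⟨hib1, hibu, hlbb, hubb⟩ := partIdx_props r u hu1 hr0 b hb1 (hru ▸ hb2)
    have hle : partIdx r u a ≤ partIdx r u b := partIdx_le_of r u (hab.le.trans hubb)
    rcases eq_or_lt_of_le hle with heq | hlt
    · show r (partIdx r u a - 1) * k +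
        (if s (partIdx r u a) then m else k - 1 - m) *
          (r (partIdx r u a) - r (partIdx r u a - 1)) + (a - r (partIdx r u a - 1)) <
        r (partIdx r u b - 1) * k +
        (if s (partIdx r u b) then m else k - 1 - m) *
          (r (partIdx r u b) - r (partIdx r u b - 1)) + (b - r (partIdx r u b - 1))
      rw [← heq]
      omega
    · have h3 : r (partIdx r u a) ≤ r (partIdx r u b - 1) :=
        hrle _ _ (by omega) (by omega)
      have h4 : r (partIdx r u b - 1) * k < theIdx r u k m s b := by
        show r (partIdx r u b - 1) * k <
          r (partIdx r u b - 1) * k +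
          (if s (partIdx r u b) then m else k - 1 - m) *
            (r (partIdx r u b) - r (partIdx r u b - 1)) + (b - r (partIdx r u b - 1))
        omega
      calc theIdx r u k m s a ≤ r (partIdx r u a) * k := hupA a ha1 ha2
        _ ≤ r (partIdx r u b - 1) * k := Nat.mul_le_mul_right k h3
        _ < theIdx r u k m s b := h4
  -- surjectivity onto the band
  have hsurj : ∀ x, 1 ≤ x → x ≤ k * k → (m : ℝ) < f x → f x < (m : ℝ) + 1 →
      ∃ a, 1 ≤ a ∧ a ≤ k ∧ theIdx r u k m s a = x := by
    intro x hx1 hx2 hfx1 hfx2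
    have hg0 : (fun i => r i * k) 0 = 0 := by simp [hr0]
    have hgu : (fun i => r i * k) u = k * k := by simp [hru]
    obtain ⟨hi1, hiu, hlo, hhi⟩ := partIdx_props (fun i => r i * k) u hu1 hg0 x hx1
      (by rw [hru]; exact hx2)
    set i := partIdx (fun i => r i * k) u x with hidef
    have hlo : r (i - 1) * k < x := hlo
    have hhi : x ≤ r i * k := hhi
    have hd : r (i - 1) < r i := hrlt i hi1 hiu
    set d := r i - r (i - 1) with hdd
    have hdpos : 0 < d := by omega
    set y := x - r (i - 1) * k with hy
    have hy1 : 1 ≤ y := by omega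
    have hyd : y ≤ d * k := by
      have hsp : r i * k = r (i - 1) * k + d * k := by
        rw [← add_mul]
        congr 1
        omega
      omega
    set m' := (y - 1) / d with hm'
    set j := (y - 1) % d + 1 with hj
    have hdm : m' * d + (y - 1) % d = y - 1 := by
      rw [hm', mul_comm]
      exact Nat.div_add_mod (y - 1) d
    have hm'k : m' < k := by
      rw [hm']
      exact Nat.div_lt_of_lt_mul (by omega)
    have hj1 : 1 ≤ j := by omega
    have hjd : j ≤ d := by
      have := Nat.mod_lt (y - 1) hdpos
      omega
    have hxval : x = r (i - 1) * k + m' * d + j := by omega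
    have hfeq := hf i hi1 hiu m' hm'k j hj1 (by omega)
    rw [show r (i - 1) * k + m' * (r i - r (i - 1)) + j = x from by rw [← hdd]; omega] at hfeq
    set a := r (i - 1) + j with ha
    have hak : a ≤ k := by
      have := hrk i hiu
      omega
    have ha1 : 1 ≤ a := by omega
    obtain ⟨hf1, hf2⟩ := hfr a ha1 hak
    rw [hfeq] at hfx1 hfx2
    have hm'eq : m' = (if s i then m else k - 1 - m) := by
      rcases hs : s i with _ | _
      · simp only [hs, Bool.false_eq_true, if_false] at hfx1 hfx2 ⊢
        have hA : m + m' + 1 ≤ k := by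
          by_contra hA
          push_neg at hA
          have : (k : ℝ) ≤ (m : ℝ) + (m' : ℝ) := by exact_mod_cast Nat.lt_succ_iff.mp hA
          linarith
        have hB : k ≤ m + m' + 1 := by
          by_contra hB
          push_neg at hB
          have : (m : ℝ) + (m' : ℝ) + 2 ≤ (k : ℝ) := by exact_mod_cast hB
          linarith
        omega
      · simp only [hs, if_true] at hfx1 hfx2 ⊢
        have hA : m ≤ m' := by
          by_contra h
          push_neg at h
          have : (m' : ℝ) + 1 ≤ (m : ℝ) := by exact_mod_cast h
          linarith
        have hB : m' ≤ m := by
          by_contra h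
          push_neg at h
          have : (m : ℝ) + 1 ≤ (m' : ℝ) := by exact_mod_cast h
          linarith
        omega
    refine ⟨a, ha1, hak, ?_⟩
    have hIa : partIdx r u a = i :=
      partIdx_uniq r u hu1 hr0 hrle hi1 hiu (by omega) (by omega)
    show r (partIdx r u a - 1) * k +
      (if s (partIdx r u a) then m else k - 1 - m) *
        (r (partIdx r u a) - r (partIdx r u a - 1)) + (a - r (partIdx r u a - 1)) = x
    rw [hIa, ← hm'eq, ← hdd]
    omega
  -- image equality
  have himg : theIdx r u k m s '' Set.Icc 1 k =
      {x | x ∈ Set.Icc 1 (k * k) ∧ (m : ℝ) < f x ∧ f x < (m : ℝ) + 1} := by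
    ext x
    constructor
    · rintro ⟨a, ha, rfl⟩
      rw [Set.mem_Icc] at ha
      obtain ⟨hr1, hr2⟩ := hrange a ha.1 ha.2
      obtain ⟨hv1, hv2⟩ := hin a ha.1 ha.2
      exact ⟨Set.mem_Icc.mpr ⟨hr1, hr2⟩, hv1, hv2⟩
    · rintro ⟨hx, h1, h2⟩
      rw [Set.mem_Icc] at hx
      obtain ⟨a, ha1, ha2, heq⟩ := hsurj x hx.1 hx.2 h1 h2
      exact ⟨a, Set.mem_Icc.mpr ⟨ha1, ha2⟩, heq⟩
  have hmono' : StrictMonoOn (theIdx r u k m s) (Set.Icc 1 k) := by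
    intro a ha b hb hab
    rw [Set.mem_Icc] at ha hb
    exact hmonoI a b ha.1 ha.2 hb.1 hb.2 hab
  constructor
  · rw [← himg, Set.ncard_image_of_injOn hmono'.injOn,
      Set.ncard_eq_toFinset_card', Set.toFinset_Icc, Nat.card_Icc]
    omega
  · refine ⟨theIdx r u k m s, hmono', himg, ?_⟩
    intro a ha b hb
    rw [Set.mem_Icc] at ha hb
    rw [hkey a ha.1 ha.2, hkey b hb.1 hb.2, add_lt_add_iff_left,
      div_lt_div_iff_of_pos_right h2k]
    exact_mod_cast Iff.rfl
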